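/- If ρ_AR = Σ_x p_x |x⟩⟨x|_A ⊗ |x⟩⟨x|_R for a probability distribution p_x, then for any distance measure Δ the partially smoothed conditional min-entropy equals the globally smoothed one: H_min^{ε,Δ}(A|Ṙ)_ρ = H_min^{ε,Δ}(A|R)_ρ. -/

import Mathlib

open Matrix Finset
open scoped ComplexOrder Kronecker

/-- Partial trace over the first (A) factor. -/
noncomputable def ptraceA {dA dR : ℕ} (σ : Matrix (Fin dA × Fin dR) (Fin dA × Fin dR) ℂ) :
    Matrix (Fin dR) (Fin dR) ℂ :=
  Matrix.of fun r r' => ∑ a, σ (a, r) (a, r')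

/-- The channel `σ ↦ Σ_x |xx⟩⟨xx| σ |xx⟩⟨xx|`. -/
noncomputable def ccPinch {d : ℕ} (σ : Matrix (Fin d × Fin d) (Fin d × Fin d) ℂ) :
    Matrix (Fin d × Fin d) (Fin d × Fin d) ℂ :=
  Matrix.of fun ij kl => if ij.1 = ij.2 ∧ ij = kl then σ ij kl else 0

private lemma diagEntry_nonneg {n : Type*} [Fintype n] [DecidableEq n]
    {M : Matrix n n ℂ} (h : M.PosSemidef) (i : n) : 0 ≤ M i i := by
  exact h.diag_nonneg

private lemma ccPinch_eq_diagonal {d : ℕ} (σ : Matrix (Fin d × Fin d) (Fin d × Fin d) ℂ) :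
    ccPinch σ =
      Matrix.diagonal (fun xy : Fin d × Fin d => if xy.1 = xy.2 then σ xy xy else 0) := by
  ext ij kl
  simp only [ccPinch, Matrix.of_apply, Matrix.diagonal_apply]
  by_cases h : ij = kl
  · subst h; simp
  · simp [h]

private lemma smulDiagSub {n : Type*} [DecidableEq n] (l : ℂ) (f g : n → ℂ) :
    l • Matrix.diagonal f - Matrix.diagonal g
      = Matrix.diagonal (fun i => l * f i - g i) := by
  ext i j
  by_cases h : i = j <;> simp [h]

private lemma ptraceA_diagonal {d : ℕ} (g : Fin d × Fin d → ℂ) :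
    ptraceA (Matrix.diagonal g) = Matrix.diagonal (fun r => ∑ a, g (a, r)) := by
  ext r r'
  simp only [ptraceA, Matrix.of_apply, Matrix.diagonal_apply]
  by_cases h : r = r'
  · subst h; simp
  · simp [h, Prod.ext_iff]

/-- for the classically correlated state
`ρ_AR = Σ_x p_x |x⟩⟨x|_A ⊗ |x⟩⟨x|_R` and any distance measure `Δ` (vanishing on equal
arguments and monotone under the pinching channel fixing `ρ_AR`), the partially
smoothed conditional min-entropy equals the globally smoothed one. -/
theorem partial_eq_global_cc {d : ℕ} (p : Fin d → ℝ) (hp : ∀ x, 0 ≤ p x)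
    (hps : ∑ x, p x = 1) (ε : ℝ) (hε : ε ∈ Set.Ioo (0 : ℝ) 1)
    (ρAR : Matrix (Fin d × Fin d) (Fin d × Fin d) ℂ)
    (hρAR : ρAR = Matrix.diagonal fun xy => if xy.1 = xy.2 then (p xy.1 : ℂ) else 0)
    (ρR : Matrix (Fin d) (Fin d) ℂ) (hρR : ρR = Matrix.diagonal fun x => (p x : ℂ))
    (Δ : Matrix (Fin d × Fin d) (Fin d × Fin d) ℂ →
         Matrix (Fin d × Fin d) (Fin d × Fin d) ℂ → ℝ)
    (hΔrefl : Δ ρAR ρAR = 0)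
    (hΔpinch : ∀ σ, Δ ρAR (ccPinch σ) ≤ Δ ρAR σ) :
    -Real.logb 2 (sInf {l : ℝ | 0 ≤ l ∧
        ∃ σ : Matrix (Fin d × Fin d) (Fin d × Fin d) ℂ,
          ((l : ℂ) • ((1 : Matrix (Fin d) (Fin d) ℂ) ⊗ₖ ρR) - σ).PosSemidef ∧
          Δ ρAR σ ≤ ε ∧ (ρR - ptraceA σ).PosSemidef ∧ σ.PosSemidef}) =
    -Real.logb 2 (sInf {l : ℝ | 0 ≤ l ∧
        ∃ σ : Matrix (Fin d × Fin d) (Fin d × Fin d) ℂ,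
          ((l : ℂ) • ((1 : Matrix (Fin d) (Fin d) ℂ) ⊗ₖ ρR) - σ).PosSemidef ∧
          Δ ρAR σ ≤ ε ∧ (σ.trace).re ≤ 1 ∧ σ.PosSemidef}) := by
  have hM : (1 : Matrix (Fin d) (Fin d) ℂ) ⊗ₖ ρR
      = Matrix.diagonal (fun i : Fin d × Fin d => (p i.2 : ℂ)) := by
    rw [hρR, ← Matrix.diagonal_one, Matrix.diagonal_kronecker_diagonal]
    simp
  have hset : {l : ℝ | 0 ≤ l ∧
        ∃ σ : Matrix (Fin d × Fin d) (Fin d × Fin d) ℂ,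
          ((l : ℂ) • ((1 : Matrix (Fin d) (Fin d) ℂ) ⊗ₖ ρR) - σ).PosSemidef ∧
          Δ ρAR σ ≤ ε ∧ (ρR - ptraceA σ).PosSemidef ∧ σ.PosSemidef} =
      {l : ℝ | 0 ≤ l ∧
        ∃ σ : Matrix (Fin d × Fin d) (Fin d × Fin d) ℂ,
          ((l : ℂ) • ((1 : Matrix (Fin d) (Fin d) ℂ) ⊗ₖ ρR) - σ).PosSemidef ∧
          Δ ρAR σ ≤ ε ∧ (σ.trace).re ≤ 1 ∧ σ.PosSemidef} := by
    ext l
    simp only [Set.mem_setOf_eq]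
    constructor
    · rintro ⟨hl0, σ, h1, h2, h3, h4⟩
      refine ⟨hl0, σ, h1, h2, ?_, h4⟩
      -- trace of σ is at most 1
      have hentry : ∀ r : Fin d, (∑ a, σ (a, r) (a, r)) ≤ (p r : ℂ) := by
        intro r
        have h0 := diagEntry_nonneg h3 r
        rw [hρR] at h0
        simp only [Matrix.sub_apply, Matrix.diagonal_apply_eq, ptraceA, Matrix.of_apply] at h0
        exact sub_nonneg.mp h0
      have htr : σ.trace ≤ (1 : ℂ) := by
        have : σ.trace = ∑ r : Fin d, ∑ a : Fin d, σ (a, r) (a, r) := by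
          rw [Matrix.trace]
          rw [Fintype.sum_prod_type]
          exact Finset.sum_comm
        rw [this]
        calc ∑ r : Fin d, ∑ a : Fin d, σ (a, r) (a, r)
            ≤ ∑ r : Fin d, (p r : ℂ) := Finset.sum_le_sum fun r _ => hentry r
          _ = (1 : ℂ) := by rw [← Complex.ofReal_sum]; rw [hps]; norm_num
      have := (Complex.le_def.mp htr).1
      simpa using this
    · rintro ⟨hl0, σ, h1, h2, h3, h4⟩
      refine ⟨hl0, ?_⟩
      rcases le_or_gt 1 l with hl1 | hl1
      · -- use ρAR itself as witness
        refine ⟨ρAR, ?_, by rw [hΔrefl]; exact le_of_lt hε.1, ?_, ?_⟩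
        · rw [hM, hρAR, smulDiagSub]
          rw [Matrix.posSemidef_diagonal_iff]
          intro xy
          by_cases h : xy.1 = xy.2
          · have h0 : (0:ℝ) ≤ (l - 1) * p xy.2 :=
              mul_nonneg (by linarith) (hp xy.2)
            have he : (l : ℂ) * (p xy.2 : ℂ) - (if xy.1 = xy.2 then (p xy.1 : ℂ) else 0)
                = (((l - 1) * p xy.2 : ℝ) : ℂ) := by
              rw [if_pos h, h]; push_cast; ring
            rw [he]
            exact Complex.zero_le_real.mpr h0
          · have h0 : (0:ℝ) ≤ l * p xy.2 := mul_nonneg hl0 (hp xy.2)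
            rw [if_neg h, sub_zero, ← Complex.ofReal_mul]
            exact Complex.zero_le_real.mpr h0
        · have : ptraceA ρAR = ρR := by
            rw [hρAR, ptraceA_diagonal, hρR]
            funext r
            simp
          rw [this, sub_self]
          exact Matrix.PosSemidef.zero
        · rw [hρAR]
          rw [Matrix.posSemidef_diagonal_iff]
          intro xy
          by_cases h : xy.1 = xy.2
          · rw [if_pos h]; exact Complex.zero_le_real.mpr (hp xy.1)
          · rw [if_neg h]
      · -- use the pinched σ as witness
        have hdiag : ∀ i : Fin d × Fin d, σ i i ≤ (l : ℂ) * (p i.2 : ℂ) := by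
          intro i
          have h0 := diagEntry_nonneg h1 i
          rw [hM] at h0
          simp only [Matrix.sub_apply, Matrix.smul_apply, Matrix.diagonal_apply_eq,
            smul_eq_mul] at h0
          exact sub_nonneg.mp h0
        refine ⟨ccPinch σ, ?_, le_trans (hΔpinch σ) h2, ?_, ?_⟩
        · rw [hM, ccPinch_eq_diagonal, smulDiagSub]
          rw [Matrix.posSemidef_diagonal_iff]
          intro xy
          by_cases h : xy.1 = xy.2
          · rw [if_pos h, sub_nonneg]
            exact hdiag xy
          · rw [if_neg h, sub_zero, ← Complex.ofReal_mul]
            exact Complex.zero_le_real.mpr (mul_nonneg hl0 (hp xy.2))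
        · rw [ccPinch_eq_diagonal, ptraceA_diagonal, hρR, Matrix.diagonal_sub]
          rw [Matrix.posSemidef_diagonal_iff]
          intro r
          simp only [Pi.sub_apply]
          have hsum : (∑ a : Fin d, if (a, r).1 = (a, r).2 then σ (a, r) (a, r) else 0)
              = σ (r, r) (r, r) := by
            simp
          rw [hsum, sub_nonneg]
          calc σ (r, r) (r, r) ≤ (l : ℂ) * (p r : ℂ) := hdiag (r, r)
            _ ≤ (p r : ℂ) := by
                rw [← Complex.ofReal_mul]
                exact Complex.real_le_real.mpr
                  (by nlinarith [hp r, hl1.le])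
        · rw [ccPinch_eq_diagonal, Matrix.posSemidef_diagonal_iff]
          intro xy
          by_cases h : xy.1 = xy.2
          · rw [if_pos h]; exact diagEntry_nonneg h4 xy
          · rw [if_neg h]
  rw [hset]
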